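/- For every real number a > 0 and every real number x > 0, the integral over t from -1 to 1 of a·(t+1)^{a-1}·(x-1) / (2^a + (t+1)^a·(x-1)) dt equals log x (here the denominator 2^a + (t+1)^a·(x-1) is strictly positive for all t ∈ [-1,1] when x > 0). -/

import Mathlib

/-- Example 1 generating function: for `a > 0` and `x > 0`,
`∫_{-1}^{1} a (t+1)^{a-1} (x-1) / (2^a + (t+1)^a (x-1)) dt = log x`. -/
theorem integral_generating_function_example1 (a x : ℝ) (ha : 0 < a) (hx : 0 < x) :
    ∫ t in (-1 : ℝ)..1,
      a * (t + 1) ^ (a - 1) * (x - 1) / ((2 : ℝ) ^ a + (t + 1) ^ a * (x - 1))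
      = Real.log x := by
  have h2 : (0:ℝ) < (2:ℝ) ^ a := Real.rpow_pos_of_pos two_pos a
  have hD : ∀ t ∈ Set.Icc (-1:ℝ) 1, 0 < (2:ℝ) ^ a + (t + 1) ^ a * (x - 1) := by
    intro t ht
    rcases le_or_gt 1 x with h1 | h1
    · have : 0 ≤ (t + 1) ^ a * (x - 1) :=
        mul_nonneg (Real.rpow_nonneg (by linarith [ht.1]) a) (by linarith)
      linarith
    · have ht1 : (0:ℝ) ≤ t + 1 := by linarith [ht.1]
      have ht2 : t + 1 ≤ 2 := by linarith [ht.2]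
      have hle : (t + 1) ^ a ≤ (2:ℝ) ^ a := Real.rpow_le_rpow ht1 ht2 ha.le
      have hmul := mul_le_mul_of_nonpos_right hle (by linarith : x - 1 ≤ 0)
      have h2x : (0:ℝ) < (2:ℝ) ^ a * x := mul_pos h2 hx
      nlinarith
  have hDcont : Continuous fun t : ℝ => (2:ℝ) ^ a + (t + 1) ^ a * (x - 1) := by
    have h1 : Continuous fun t : ℝ => (t + 1) ^ a := by
      apply Continuous.rpow_const (by continuity)
      intro t; exact Or.inr ha.le
    continuity
  set F := fun t : ℝ => Real.log ((2:ℝ) ^ a + (t + 1) ^ a * (x - 1)) with hF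
  have hcont : ContinuousOn F (Set.Icc (-1:ℝ) 1) := by
    apply ContinuousOn.log hDcont.continuousOn
    intro t ht; exact (hD t ht).ne'
  have hderiv : ∀ t ∈ Set.Ioo (-1:ℝ) 1,
      HasDerivAt F (a * (t + 1) ^ (a - 1) * (x - 1) /
        ((2:ℝ) ^ a + (t + 1) ^ a * (x - 1))) t := by
    intro t ht
    have ht1 : (0:ℝ) < t + 1 := by linarith [ht.1]
    have h1 : HasDerivAt (fun t : ℝ => t + 1) 1 t := (hasDerivAt_id t).add_const 1
    have h2' : HasDerivAt (fun t : ℝ => (t + 1) ^ a) (a * (t + 1) ^ (a - 1)) t := by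
      have := (Real.hasDerivAt_rpow_const (x := t + 1) (p := a) (Or.inl ht1.ne')).comp t h1
      simpa [Function.comp_def] using this
    have h3 : HasDerivAt (fun t : ℝ => (2:ℝ) ^ a + (t + 1) ^ a * (x - 1))
        (a * (t + 1) ^ (a - 1) * (x - 1)) t := (h2'.mul_const (x - 1)).const_add _
    exact h3.log (hD t (Set.mem_Icc_of_Ioo ht)).ne'
  have hint : IntervalIntegrable
      (fun t => a * (t + 1) ^ (a - 1) * (x - 1) /
        ((2:ℝ) ^ a + (t + 1) ^ a * (x - 1))) MeasureTheory.volume (-1) 1 := by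
    have hpow : IntervalIntegrable (fun t : ℝ => (t + 1) ^ (a - 1))
        MeasureTheory.volume (-1) 1 := by
      have h0 : IntervalIntegrable (fun u : ℝ => u ^ (a - 1))
          MeasureTheory.volume 0 2 :=
        intervalIntegral.intervalIntegrable_rpow' (by linarith)
      have := h0.comp_add_right 1
      norm_num at this
      exact this
    have hg : ContinuousOn
        (fun t : ℝ => a * (x - 1) / ((2:ℝ) ^ a + (t + 1) ^ a * (x - 1)))
        (Set.uIcc (-1:ℝ) 1) := by
      apply ContinuousOn.div continuousOn_const hDcont.continuousOn
      intro t ht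
      rw [Set.uIcc_of_le (by norm_num : (-1:ℝ) ≤ 1)] at ht
      exact (hD t ht).ne'
    have := hpow.mul_continuousOn hg
    convert this using 2 with t
    ring
  have key := intervalIntegral.integral_eq_sub_of_hasDerivAt_of_le (by norm_num)
    hcont hderiv hint
  rw [key, hF]
  have e1 : ((1:ℝ) + 1) ^ a = (2:ℝ) ^ a := by norm_num
  have e2 : ((-1:ℝ) + 1) ^ a = 0 := by
    norm_num
    exact Real.zero_rpow ha.ne'
  simp only [e1, e2]
  rw [show (2:ℝ) ^ a + (2:ℝ) ^ a * (x - 1) = (2:ℝ) ^ a * x by ring]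
  rw [Real.log_mul h2.ne' hx.ne']
  ring
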